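/- Let G be a profinite group with descending q-central sequence G^(i). Then the restriction map H¹(G^(i), ℤ/q)^G → H¹(G^(i+1), ℤ/q)^G on G-invariant continuous homomorphisms to ℤ/q is the zero map, for all i ≥ 1. -/

import Mathlib

/-- The commutator convention of the paper: `[x,y] = x⁻¹y⁻¹xy`. -/
def pComm {G : Type*} [Group G] (x y : G) : G := x⁻¹ * y⁻¹ * x * y

/-- `H^q [H,G]` (abstract version): the subgroup generated by `q`-th powers of
elements of `H` and commutators `[h,g]`, `h ∈ H`, `g ∈ G`. -/
def qVerbal {G : Type*} [Group G] (q : ℕ) (H : Subgroup G) : Subgroup G :=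
  Subgroup.closure ({x : G | ∃ h ∈ H, x = h ^ q} ∪
    {x : G | ∃ h ∈ H, ∃ g : G, x = pComm h g})

/-- `H^q [H,G]` (topological version): the *closed* subgroup generated by
`q`-th powers of elements of `H` and commutators `[h,g]`, `h ∈ H`, `g ∈ G`. -/
def qVerbalC {G : Type*} [Group G] [TopologicalSpace G] [IsTopologicalGroup G]
    (q : ℕ) (H : Subgroup G) : Subgroup G :=
  (qVerbal q H).topologicalClosure

/-- The descending q-central sequence of closed subgroups; `qcsC q G i` is
`G^(i+1)` in the paper's (1-based) notation. -/
def qcsC (q : ℕ) (G : Type*) [Group G] [TopologicalSpace G] [IsTopologicalGroup G] :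
    ℕ → Subgroup G
  | 0 => ⊤
  | i + 1 => qVerbalC q (qcsC q G i)

theorem qVerbal_normal {G : Type*} [Group G] (q : ℕ) {H : Subgroup G} (hH : H.Normal) :
    (qVerbal q H).Normal := by
  constructor
  intro n hn g
  set S : Set G := {x : G | ∃ h ∈ H, x = h ^ q} ∪ {x : G | ∃ h ∈ H, ∃ g : G, x = pComm h g} with hS
  have himg : (MulAut.conj g) '' S ⊆ (Subgroup.closure S : Set G) := by
    rintro _ ⟨x, hx, rfl⟩
    rcases hx with ⟨h, hh, rfl⟩ | ⟨h, hh, g', rfl⟩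
    · have : (MulAut.conj g) (h ^ q) = (g * h * g⁻¹) ^ q := by
        simp [MulAut.conj_apply, conj_pow]
      rw [this]
      exact Subgroup.subset_closure (Or.inl ⟨g * h * g⁻¹, hH.conj_mem h hh g, rfl⟩)
    · have : (MulAut.conj g) (pComm h g') = pComm (g * h * g⁻¹) (g * g' * g⁻¹) := by
        simp only [MulAut.conj_apply, pComm]
        group
      rw [this]
      exact Subgroup.subset_closure
        (Or.inr ⟨g * h * g⁻¹, hH.conj_mem h hh g, g * g' * g⁻¹, rfl⟩)
  have h1 : (Subgroup.closure S).map (MulAut.conj g).toMonoidHom ≤ Subgroup.closure S := by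
    rw [MonoidHom.map_closure]
    exact (Subgroup.closure_le _).2 himg
  exact h1 ⟨n, hn, by simp [MulAut.conj_apply]⟩

instance qcsC_normal (q : ℕ) (G : Type*) [Group G] [TopologicalSpace G] [IsTopologicalGroup G]
    (i : ℕ) : (qcsC q G i).Normal := by
  induction i with
  | zero => exact ⟨fun n _ g => Subgroup.mem_top _⟩
  | succ i ih =>
    have := qVerbal_normal q ih
    exact Subgroup.is_normal_topologicalClosure (qVerbal q (qcsC q G i))

/-- For a profinite group `G` and a prime power `q`, the restriction map
`H¹(G^(i), ℤ/q)^G → H¹(G^(i+1), ℤ/q)^G` is trivial for all `i ≥ 1`: every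
`G`-invariant continuous homomorphism `G^(i) → ℤ/q` vanishes on `G^(i+1)`.
(Here `qcsC q G i` is the paper's `G^(i+1)`, so the statement ranges over all
terms of the descending q-central sequence of closed subgroups.) -/
theorem restriction_trivial {G : Type*} [Group G] [TopologicalSpace G] [IsTopologicalGroup G]
    [CompactSpace G] [T2Space G] [TotallyDisconnectedSpace G]
    (p d q : ℕ) (hp : p.Prime) (hd : 1 ≤ d) (hq : q = p ^ d) (i : ℕ)
    (φ : ↥(qcsC q G i) →* Multiplicative (ZMod q))
    (hcont : @Continuous ↥(qcsC q G i) (Multiplicative (ZMod q)) _ ⊥ φ)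
    (hinv : ∀ (g : G) (x : ↥(qcsC q G i)) (h : g * ↑x * g⁻¹ ∈ qcsC q G i),
      φ ⟨g * ↑x * g⁻¹, h⟩ = φ x) :
    ∀ (y : G) (hy1 : y ∈ qcsC q G (i + 1)) (hy : y ∈ qcsC q G i), φ ⟨y, hy⟩ = 1 := by
  classical
  -- the kernel is closed in ↥H
  have hkerclosed : IsClosed ((MonoidHom.ker φ : Subgroup ↥(qcsC q G i)) : Set ↥(qcsC q G i)) := by
    have h1 : IsClosed (@Set.singleton (Multiplicative (ZMod q)) 1) := by
      letI : TopologicalSpace (Multiplicative (ZMod q)) := ⊥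
      haveI : DiscreteTopology (Multiplicative (ZMod q)) := ⟨rfl⟩
      exact isClosed_discrete _
    have : (MonoidHom.ker φ : Set ↥(qcsC q G i)) = φ ⁻¹' {1} := by
      ext x; simp [MonoidHom.mem_ker]
    rw [this]
    exact @IsClosed.preimage _ _ _ ⊥ φ hcont _ h1
  -- H is closed in G
  have hHclosed : IsClosed ((qcsC q G i : Subgroup G) : Set G) := by
    cases i with
    | zero => simpa [qcsC] using isClosed_univ
    | succ j => exact (qVerbal q (qcsC q G j)).isClosed_topologicalClosure
  -- N : the image of the kernel in G, a closed subgroup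
  set N : Subgroup G := Subgroup.map (qcsC q G i).subtype (MonoidHom.ker φ) with hN
  have hNclosed : IsClosed (N : Set G) := by
    have hemb : Topology.IsClosedEmbedding ((↑) : ↥(qcsC q G i) → G) :=
      Topology.IsClosedEmbedding.subtypeVal hHclosed
    have : (N : Set G) = ((↑) : ↥(qcsC q G i) → G) '' (MonoidHom.ker φ : Set ↥(qcsC q G i)) := by
      ext x
      simp [hN, Subgroup.mem_map, Set.mem_image, Subgroup.coe_subtype]
    rw [this]
    exact hemb.isClosedMap _ hkerclosed
  -- generators lie in N
  have hgen : qVerbal q (qcsC q G i) ≤ N := by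
    rw [qVerbal]
    apply (Subgroup.closure_le _).2
    rintro x (⟨h, hh, rfl⟩ | ⟨h, hh, g, rfl⟩)
    · refine ⟨(⟨h, hh⟩ : ↥(qcsC q G i)) ^ q, ?_, by simp⟩
      simp only [SetLike.mem_coe, MonoidHom.mem_ker, map_pow]
      have : ∀ z : Multiplicative (ZMod q), z ^ q = 1 := by
        intro z
        have : (q : ℕ) • (Multiplicative.toAdd z) = 0 := by
          simp [nsmul_eq_mul, ZMod.natCast_self]
        calc z ^ q = Multiplicative.ofAdd ((q : ℕ) • Multiplicative.toAdd z) := by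
              rfl
          _ = 1 := by rw [this]; rfl
      exact this _
    · have hconj : g⁻¹ * h * g ∈ qcsC q G i := by
        have := (qcsC_normal q G i).conj_mem h hh g⁻¹
        simpa using this
      refine ⟨(⟨h, hh⟩ : ↥(qcsC q G i))⁻¹ * ⟨g⁻¹ * h * g, hconj⟩, ?_, ?_⟩
      · simp only [SetLike.mem_coe, MonoidHom.mem_ker, map_mul, map_inv]
        have := hinv g⁻¹ ⟨h, hh⟩ (by simpa using hconj)
        have heq : φ (⟨g⁻¹ * h * g, hconj⟩ : ↥(qcsC q G i)) = φ ⟨h, hh⟩ := by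
          convert this using 3
          group
        rw [heq]
        group
      · simp only [Subgroup.coe_subtype, Subgroup.coe_mul, InvMemClass.coe_inv]
        show h⁻¹ * (g⁻¹ * h * g) = pComm h g
        rw [pComm]; group
  -- closure of generators lies in N
  have hle : qcsC q G (i + 1) ≤ N := by
    show qVerbalC q (qcsC q G i) ≤ N
    exact Subgroup.topologicalClosure_minimal _ hgen hNclosed
  intro y hy1 hy
  obtain ⟨x, hxker, hxeq⟩ := hle hy1
  have heq2 : (⟨y, hy⟩ : ↥(qcsC q G i)) = x := by
    ext; simp [← hxeq]
  rw [heq2]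
  exact hxker
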